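/- For all real numbers ε and τ with 0 < ε ≤ 1/2 and 0 < τ ≤ 1/2, and every real n ≥ 1, one has ((1 − ε)/(1 − (1 − τ)·ε))^{9·ln n / ε} ≥ n^{−36·τ}, where the powers are real exponentiation. Equivalently, writing ε' = (1 − τ)·ε, the base satisfies (1 − ε)/(1 − ε') = 1 − τε/(1 − (1 − τ)ε) and the inequality (1 − τε/(1 − (1 − τ)ε))^{9·ln n/ε} ≥ n^{−36τ} holds. -/

import Mathlib

/-- Lower bound on the per-walk success probability of translating a PageRank walk of
length `9 ln n / ε` from jump probability `ε` to jump probability `(1-τ)·ε`: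
`((1-ε)/(1-(1-τ)ε))^{9 ln n / ε} ≥ n^{-36τ}`; moreover the base equals
`1 - τε/(1-(1-τ)ε)` and the corresponding inequality holds in that form as well. -/
theorem translate_walk_eps_success (ε τ n : ℝ)
    (hε0 : 0 < ε) (hε1 : ε ≤ 1 / 2) (hτ0 : 0 < τ) (hτ1 : τ ≤ 1 / 2) (hn : 1 ≤ n) :
    ((n : ℝ) ^ (-(36 * τ)) ≤ ((1 - ε) / (1 - (1 - τ) * ε)) ^ (9 * Real.log n / ε)) ∧
    ((1 - ε) / (1 - (1 - τ) * ε) = 1 - τ * ε / (1 - (1 - τ) * ε)) ∧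
    ((n : ℝ) ^ (-(36 * τ)) ≤ (1 - τ * ε / (1 - (1 - τ) * ε)) ^ (9 * Real.log n / ε)) := by
  have hd : (0:ℝ) < 1 - (1 - τ) * ε := by nlinarith
  have hne : (1 - (1 - τ) * ε) ≠ 0 := ne_of_gt hd
  have hident : (1 - ε) / (1 - (1 - τ) * ε) = 1 - τ * ε / (1 - (1 - τ) * ε) := by
    rw [eq_sub_iff_add_eq, ← add_div, div_eq_one_iff_eq hne]; ring
  have hexp : Real.exp (-(4 * (τ * ε))) ≤ (1 - ε) / (1 - (1 - τ) * ε) := by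
    have h1 : Real.exp (-(4 * (τ * ε))) ≤ (1 + 4 * (τ * ε))⁻¹ := by
      rw [Real.exp_neg]
      apply inv_anti₀ (by positivity)
      have := Real.add_one_le_exp (4 * (τ * ε))
      linarith
    have h2 : (1 + 4 * (τ * ε))⁻¹ ≤ (1 - ε) / (1 - (1 - τ) * ε) := by
      rw [inv_eq_one_div, div_le_div_iff₀ (by positivity) hd]
      nlinarith [mul_pos hτ0 hε0, mul_pos (mul_pos hτ0 hε0) hε0]
    linarith
  have hlogn : 0 ≤ Real.log n := Real.log_nonneg hn
  have hE : 0 ≤ 9 * Real.log n / ε := by positivity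
  have key : (n : ℝ) ^ (-(36 * τ)) ≤ ((1 - ε) / (1 - (1 - τ) * ε)) ^ (9 * Real.log n / ε) := by
    have h3 : (Real.exp (-(4 * (τ * ε)))) ^ (9 * Real.log n / ε)
        ≤ ((1 - ε) / (1 - (1 - τ) * ε)) ^ (9 * Real.log n / ε) :=
      Real.rpow_le_rpow (Real.exp_pos _).le hexp hE
    have h4 : (n : ℝ) ^ (-(36 * τ)) = (Real.exp (-(4 * (τ * ε)))) ^ (9 * Real.log n / ε) := by
      rw [← Real.exp_mul, Real.rpow_def_of_pos (by linarith : (0:ℝ) < n)]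
      congr 1
      field_simp; ring
    rw [h4]; exact h3
  exact ⟨key, hident, by rw [← hident]; exact key⟩
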